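/- The set of vectors w = (w₁,w₂,w₃,w₄,w₅,w₆) ∈ ℝ⁶ satisfying the four conditions (i) w₁ = w₆ = 0, (ii) (2−√2)w₂ + (−2+2√2)w₃ + (2−√2)w₅ = 0, (iii) 2w₂ − 2w₅ = 1, and (iv) (−5+2√2)w₂ + (4−4√2)w₃ + (3−2√2)w₄ + (−7+6√2)w₅ = −π/4, is exactly the line {(0, 1/2, −1/(2√2), (3/4 + 1/√2)(2−π), 0, 0) + t·(0, 1, −√2, −4−4√2, 1, 0) : t ∈ ℝ}. -/

import Mathlib

noncomputable section

/-- Proposition 3 of the paper: the complete solution of the linear system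
characterizing asymptotically unbiased Euler-characteristic estimators
for Boolean models with ball grains.  Weight vectors are `w : Fin 6 → ℝ`, with `w i`
the weight of configuration class `η_{i+1}`. -/
theorem stmt_5 :
    {w : Fin 6 → ℝ |
        w 0 = 0 ∧ w 5 = 0 ∧
        (2 - Real.sqrt 2) * w 1 + (-2 + 2 * Real.sqrt 2) * w 2 +
            (2 - Real.sqrt 2) * w 4 = 0 ∧
        2 * w 1 - 2 * w 4 = 1 ∧
        (-5 + 2 * Real.sqrt 2) * w 1 + (4 - 4 * Real.sqrt 2) * w 2 +
            (3 - 2 * Real.sqrt 2) * w 3 + (-7 + 6 * Real.sqrt 2) * w 4 = -(Real.pi / 4)} =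
      {w : Fin 6 → ℝ | ∃ t : ℝ,
        w = ![0, 1 / 2, -(1 / (2 * Real.sqrt 2)),
              (3 / 4 + 1 / Real.sqrt 2) * (2 - Real.pi), 0, 0] +
            t • ![0, 1, -Real.sqrt 2, -4 - 4 * Real.sqrt 2, 1, 0]} := by
  have hs2 : Real.sqrt 2 ^ 2 = 2 := Real.sq_sqrt (by norm_num)
  have hs0 : (0:ℝ) < Real.sqrt 2 := Real.sqrt_pos.mpr (by norm_num)
  set s := Real.sqrt 2 with hs
  have hinv : (1:ℝ) / (2 * s) = s / 4 := by
    rw [div_eq_div_iff (by positivity) (by norm_num)]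
    linear_combination -2 * hs2
  have h1s : (1:ℝ) / s = s / 2 := by
    rw [div_eq_div_iff (by positivity) (by norm_num)]
    linear_combination -hs2
  ext w
  simp only [Set.mem_setOf_eq]
  constructor
  · rintro ⟨h0, h5, h2, h3, h4⟩
    refine ⟨w 4, ?_⟩
    funext i
    have hinv' : s⁻¹ = s / 2 := by rw [← one_div]; exact h1s
    fin_cases i <;> simp [Matrix.cons_val_succ]
    · exact h0
    · linarith
    · have h1 : w 1 = 1 / 2 + w 4 := by linarith
      rw [h1] at h2
      rw [hinv']
      linear_combination ((1 + s) / 2) * h2 + (1 / 4 - w 2 + w 4) * hs2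
    · have h1 : w 1 = 1 / 2 + w 4 := by linarith
      have hw2 : w 2 = -(s / 4) - s * w 4 := by
        rw [h1] at h2
        linear_combination ((1 + s) / 2) * h2 + (1 / 4 - w 2 + w 4) * hs2
      rw [h1, hw2] at h4
      rw [hinv']
      linear_combination (3 + 2 * s) * h4 +
        (-3 + 4 * w 3 - 20 * w 4 - 2 * s - 8 * s * w 4) * hs2
    · rw [h5]
  · rintro ⟨t, rfl⟩
    have hinv' : s⁻¹ = s / 2 := by rw [← one_div]; exact h1s
    simp only [Pi.add_apply, Pi.smul_apply, smul_eq_mul]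
    norm_num [hinv']
    simp only [Matrix.cons_val]
    refine ⟨?_, ?_, by ring, ?_⟩
    · show (0:ℝ) + t * 0 = 0; ring
    · linear_combination (-(1:ℝ) / 2 - 2 * t) * hs2
    · linear_combination (-1 + Real.pi + 12 * t) * hs2
end
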